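/- For every M > 0 there exists A₀ > 0 such that for every A ≥ A₀ and every function q satisfying the hypotheses with q(0) = A, one has both ∫_{-∞}^{∞} q(s) ds ≥ M and ∫_{-∞}^{∞} q(s)² ds ≥ M. -/

import Mathlib

open MeasureTheory Filter Real

theorem stmt_15 (a μ : ℝ) (ha : 0 < a) (hμ : 1 / 3 < μ) :
    ∀ M : ℝ, 0 < M → ∃ A₀ : ℝ, 0 < A₀ ∧
      ∀ A : ℝ, A₀ ≤ A → ∀ q : ℝ → ℝ,
        (ContDiff ℝ 2 q ∧
        (∀ s : ℝ, deriv (deriv q) s * q s + a * s * deriv q s * q s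
          + μ * q s + (1 / 3) * s * deriv q s = 0) ∧
        q 0 = A ∧ deriv q 0 = 0 ∧
        (∀ s : ℝ, 0 < q s) ∧
        (∀ s : ℝ, q (-s) = q s) ∧
        StrictAntiOn q (Set.Ioi 0) ∧
        Tendsto q atTop (nhds 0) ∧
        Tendsto (deriv q) atTop (nhds 0) ∧
        Integrable q ∧
        Integrable (fun s : ℝ => q s ^ 2) ∧
        Integrable (fun s : ℝ => deriv q s ^ 2)) →
        M ≤ (∫ s : ℝ, q s) ∧ M ≤ ∫ s : ℝ, q s ^ 2 := by
  intro M hM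
  have hμ0 : 0 < μ := lt_trans (by norm_num) hμ
  refine ⟨μ + 2 * M + 1, by nlinarith, ?_⟩
  rintro A hA q ⟨hq2, hode, hq0, hq'0, hpos, heven, hanti, -, -, hint, hint2, -⟩
  have hA1 : 1 ≤ A := by nlinarith
  have hAμ : μ ≤ A := by nlinarith
  have hAM : 2 * M ≤ A := by nlinarith
  have hA0 : 0 < A := by linarith
  -- differentiability facts
  have hd1 : Differentiable ℝ q := hq2.differentiable (by norm_num)
  have hcd1 : ContDiff ℝ 1 (deriv q) := by
    have h := (contDiff_succ_iff_deriv (n := 1)).mp (by exact_mod_cast hq2)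
    exact h.2.2
  have hd2 : Differentiable ℝ (deriv q) := hcd1.differentiable one_ne_zero
  -- q' ≤ 0 for s ≥ 0
  have hq'le : ∀ s : ℝ, 0 ≤ s → deriv q s ≤ 0 := by
    intro s hs
    rcases hs.eq_or_lt with h | h
    · rw [← h, hq'0]
    · have hder : HasDerivWithinAt q (deriv q s) (Set.Ioi s) s :=
        (hd1 s).hasDerivAt.hasDerivWithinAt
      have htend := hasDerivWithinAt_iff_tendsto_slope.mp hder
      have hset : Set.Ioi s \ {s} = Set.Ioi s := Set.diff_singleton_eq_self (by simp)
      rw [hset] at htend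
      refine le_of_tendsto htend ?_
      filter_upwards [self_mem_nhdsWithin] with t ht
      have hts : s < t := ht
      have hqlt : q t < q s := hanti h (lt_trans h hts) hts
      have : slope q s t = (q t - q s) / (t - s) := by
        simp [slope_def_field]
      rw [this]
      exact div_nonpos_of_nonpos_of_nonneg (by linarith) (by linarith)
  -- q'' ≥ -μ for s ≥ 0
  have hq'' : ∀ s : ℝ, 0 ≤ s → -μ ≤ deriv (deriv q) s := by
    intro s hs
    have h := hode s
    have hqs := hpos s
    have hq's := hq'le s hs
    have hx : 0 ≤ a * s := mul_nonneg ha.le hs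
    have hy : deriv q s * q s ≤ 0 := mul_nonpos_of_nonpos_of_nonneg hq's hqs.le
    have h1 : a * s * deriv q s * q s ≤ 0 := by nlinarith [mul_nonneg hx (neg_nonneg.mpr hy)]
    have h2 : (1 / 3) * s * deriv q s ≤ 0 := by nlinarith [mul_nonneg hs (neg_nonneg.mpr hq's)]
    have key : 0 ≤ (deriv (deriv q) s + μ) * q s := by nlinarith
    have := (mul_nonneg_iff_of_pos_right hqs).mp key
    linarith
  -- g = q' + μ s is monotone on [0,1]
  have hgmono : MonotoneOn (fun s => deriv q s + μ * s) (Set.Icc (0:ℝ) 1) := by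
    apply monotoneOn_of_deriv_nonneg (convex_Icc 0 1)
    · exact (hd2.continuous.add (continuous_const.mul continuous_id)).continuousOn
    · exact (hd2.add ((differentiable_id.const_mul μ))).differentiableOn
    · intro x hx
      rw [interior_Icc] at hx
      have hder : HasDerivAt (fun s => deriv q s + μ * s)
          (deriv (deriv q) x + μ * 1) x :=
        (hd2 x).hasDerivAt.add ((hasDerivAt_id x).const_mul μ)
      rw [hder.deriv]
      have := hq'' x hx.1.le
      linarith
  -- hence q' s ≥ -μ s on [0,1]
  have hq'ge : ∀ s ∈ Set.Icc (0:ℝ) 1, -(μ * s) ≤ deriv q s := by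
    intro s hs
    have := hgmono (Set.left_mem_Icc.mpr one_pos.le) hs hs.1
    simp only [mul_zero, hq'0, add_zero] at this
    linarith
  -- h = q + μ s^2/2 is monotone on [0,1]
  have hhmono : MonotoneOn (fun s => q s + μ * s ^ 2 / 2) (Set.Icc (0:ℝ) 1) := by
    apply monotoneOn_of_deriv_nonneg (convex_Icc 0 1)
    · exact (hd1.continuous.add (by continuity)).continuousOn
    · exact (hd1.add (by fun_prop)).differentiableOn
    · intro x hx
      rw [interior_Icc] at hx
      have hder : HasDerivAt (fun s => q s + μ * s ^ 2 / 2)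
          (deriv q x + μ * (2 * x ^ 1) / 2) x := by
        exact (hd1 x).hasDerivAt.add (((hasDerivAt_pow 2 x).const_mul μ).div_const 2)
      rw [hder.deriv]
      have := hq'ge x ⟨hx.1.le, hx.2.le⟩
      simp only [pow_one]
      linarith
  -- q s ≥ A/2 on [0,1]
  have hlow0 : ∀ s ∈ Set.Icc (0:ℝ) 1, A / 2 ≤ q s := by
    intro s hs
    have := hhmono (Set.left_mem_Icc.mpr one_pos.le) hs hs.1
    simp only [hq0] at this
    have hs1 : s ≤ 1 := hs.2
    have hs0 : 0 ≤ s := hs.1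
    have hs2 : s ^ 2 ≤ 1 := by nlinarith
    norm_num at this
    nlinarith [mul_le_mul_of_nonneg_left hs2 hμ0.le]
  -- q s ≥ A/2 on [-1,1]
  have hlow : ∀ s ∈ Set.Icc (-1:ℝ) 1, A / 2 ≤ q s := by
    intro s hs
    rcases le_or_gt 0 s with h | h
    · exact hlow0 s ⟨h, hs.2⟩
    · have : q (-s) = q s := heven s
      rw [← this]
      exact hlow0 (-s) ⟨by linarith, by linarith [hs.1]⟩
  have hvol : ((volume (Set.Icc (-1:ℝ) 1)).toReal : ℝ) = 2 := by
    rw [Real.volume_Icc]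
    norm_num
  constructor
  · -- M ≤ ∫ q
    have hsub : ∫ s in Set.Icc (-1:ℝ) 1, q s ≤ ∫ s, q s :=
      setIntegral_le_integral hint (Eventually.of_forall fun s => (hpos s).le)
    have hconst : ∫ s in Set.Icc (-1:ℝ) 1, (A / 2 : ℝ) ≤ ∫ s in Set.Icc (-1:ℝ) 1, q s :=
      setIntegral_mono_on (integrableOn_const (by simp))
        hint.integrableOn measurableSet_Icc hlow
    have heq : ∫ s in Set.Icc (-1:ℝ) 1, (A / 2 : ℝ) = 2 * (A / 2) := by
      rw [setIntegral_const, measureReal_def, hvol]; simp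
    rw [heq] at hconst
    linarith
  · -- M ≤ ∫ q^2
    have hsub : ∫ s in Set.Icc (-1:ℝ) 1, q s ^ 2 ≤ ∫ s, q s ^ 2 :=
      setIntegral_le_integral hint2 (Eventually.of_forall fun s => sq_nonneg _)
    have hconst : ∫ s in Set.Icc (-1:ℝ) 1, ((A / 2) ^ 2 : ℝ)
        ≤ ∫ s in Set.Icc (-1:ℝ) 1, q s ^ 2 := by
      apply setIntegral_mono_on (integrableOn_const (by simp))
        hint2.integrableOn measurableSet_Icc
      intro s hs
      have h1 := hlow s hs
      have h2 : 0 < A / 2 := by linarith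
      nlinarith
    have heq : ∫ s in Set.Icc (-1:ℝ) 1, ((A / 2) ^ 2 : ℝ) = 2 * (A / 2) ^ 2 := by
      rw [setIntegral_const, measureReal_def, hvol]; simp
    rw [heq] at hconst
    nlinarith
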